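/- The word 11 over the binary alphabet is Hamming-isometric: for every n and every pair of words u, v of length n avoiding the factor 11, u can be transformed into v by changing one differing bit at a time so that every intermediate word also avoids the factor 11. -/

import Mathlib

open Finset

/-- The factor `f` occurs in `u` at position `j`. -/
def occursAt {A : Type*} {l n : ℕ} (f : Fin l → A) (u : Fin n → A) (j : ℕ) : Prop :=
  ∃ h : j + l ≤ n, ∀ i : Fin l, u ⟨j + i.1, by have := i.isLt; omega⟩ = f i

/-- `u` is `f`-free: `f` is not a contiguous factor of `u`. -/
def Free {A : Type*} {l n : ℕ} (f : Fin l → A) (u : Fin n → A) : Prop :=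
  ∀ j : ℕ, ¬ occursAt f u j

/-- There is an `f`-free transformation from `u` to `v`: a sequence of words starting at `u`,
ending at `v`, each obtained from the previous by changing one position where it differs
from `v` to the letter of `v`, all words being `f`-free. -/
def FreeTransform {A : Type*} [DecidableEq A] {l n : ℕ} (f : Fin l → A)
    (u v : Fin n → A) : Prop :=
  ∃ w : Fin (hammingDist u v + 1) → Fin n → A,
    w 0 = u ∧ w (Fin.last _) = v ∧ (∀ j, Free f (w j)) ∧
    ∀ j : Fin (hammingDist u v),
      ∃ p : Fin n, w j.castSucc p ≠ v p ∧ w j.succ = Function.update (w j.castSucc) p (v p)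

/-- `f` is Hamming-isometric. -/
def HammingIsometric {A : Type*} [DecidableEq A] {l : ℕ} (f : Fin l → A) : Prop :=
  ∀ (n : ℕ) (u v : Fin n → A), Free f u → Free f v → FreeTransform f u v

/-- `u` has a `k`-error border: a proper prefix and suffix of the same positive length `m`
at Hamming distance exactly `k`. -/
def hasKErrorBorder {A : Type*} [DecidableEq A] {n : ℕ} (u : Fin n → A) (k : ℕ) : Prop :=
  ∃ m : ℕ, 0 < m ∧ ∃ h : m < n,
    hammingDist (fun i : Fin m => u ⟨i.1, by have := i.isLt; omega⟩)
      (fun i : Fin m => u ⟨n - m + i.1, by have := i.isLt; omega⟩) = k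

/-- Lee distance between letters of `ZMod d`. -/
def leeDistL {d : ℕ} [NeZero d] (a b : ZMod d) : ℕ :=
  min (max (a.val - b.val) (b.val - a.val)) (d - max (a.val - b.val) (b.val - a.val))

/-- Lee distance between words of length `n` over `ZMod d`. -/
def leeDist {d n : ℕ} [NeZero d] (u v : Fin n → ZMod d) : ℕ :=
  ∑ i, leeDistL (u i) (v i)

/-- `u` has a `k`-Lee-error border. -/
def hasKLeeErrorBorder {d n : ℕ} [NeZero d] (u : Fin n → ZMod d) (k : ℕ) : Prop :=
  ∃ m : ℕ, 0 < m ∧ ∃ h : m < n,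
    leeDist (fun i : Fin m => u ⟨i.1, by have := i.isLt; omega⟩)
      (fun i : Fin m => u ⟨n - m + i.1, by have := i.isLt; omega⟩) = k

/-- The `d`-ary `n`-cube `Q_n^d`. -/
def QGraph (n d : ℕ) : SimpleGraph (Fin n → ZMod d) where
  Adj u v := ∃ i, u i ≠ v i ∧ (v i = u i + 1 ∨ v i = u i - 1) ∧ ∀ j, j ≠ i → u j = v j
  symm := by
    constructor
    rintro u v ⟨i, hne, hpm, hrest⟩
    refine ⟨i, hne.symm, ?_, fun j hj => (hrest j hj).symm⟩
    rcases hpm with h | h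
    · right; rw [h]; ring
    · left; rw [h]; ring
  loopless := by constructor; rintro u ⟨i, hne, -⟩; exact hne rfl

/-- `f` is Lee-isometric: for all `n`, the subgraph of `Q_n^d` induced on `f`-free words
is isometric in `Q_n^d`. -/
def LeeIsometric {l d : ℕ} (f : Fin l → ZMod d) : Prop :=
  ∀ (n : ℕ) (u v : Fin n → ZMod d) (hu : Free f u) (hv : Free f v),
    ((QGraph n d).induce {w | Free f w}).dist ⟨u, hu⟩ ⟨v, hv⟩ = (QGraph n d).dist u v

lemma free11_iff {n : ℕ} {u : Fin n → Fin 2} :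
    Free (![1,1] : Fin 2 → Fin 2) u ↔
    ∀ j : ℕ, ∀ h : j + 2 ≤ n, ¬ (u ⟨j, by omega⟩ = 1 ∧ u ⟨j+1, by omega⟩ = 1) := by
  constructor
  · rintro hu j h ⟨h1, h2⟩
    exact hu j ⟨h, by
      intro i
      fin_cases i
      · simpa using h1
      · simpa using h2⟩
  · rintro H j ⟨h, hocc⟩
    refine H j h ⟨?_, ?_⟩
    · simpa using hocc 0
    · simpa using hocc 1

lemma dist_update {n : ℕ} {A : Type*} [DecidableEq A] (u v : Fin n → A) (p : Fin n)
    (hp : u p ≠ v p) :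
    hammingDist (Function.update u p (v p)) v + 1 = hammingDist u v := by
  classical
  have hmem : p ∈ univ.filter (fun i => u i ≠ v i) := by simp [hp]
  have hset : (univ.filter fun i => Function.update u p (v p) i ≠ v i)
      = (univ.filter fun i => u i ≠ v i).erase p := by
    ext i
    by_cases h : i = p <;> simp [Function.update_apply, h]
  show (univ.filter fun i => Function.update u p (v p) i ≠ v i).card + 1 = _
  rw [hset, card_erase_of_mem hmem]
  have : 0 < (univ.filter fun i => u i ≠ v i).card := card_pos.mpr ⟨p, hmem⟩
  show _ = (univ.filter fun i => u i ≠ v i).card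
  omega

lemma fin2_eq_zero_or_one (a : Fin 2) : a = 0 ∨ a = 1 := by
  fin_cases a
  · exact Or.inl rfl
  · exact Or.inr rfl

lemma key {n : ℕ} {u v : Fin n → Fin 2} (hu : Free (![1,1] : Fin 2 → Fin 2) u)
    (hv : Free (![1,1] : Fin 2 → Fin 2) v) (hne : u ≠ v) :
    ∃ p : Fin n, u p ≠ v p ∧ Free (![1,1] : Fin 2 → Fin 2) (Function.update u p (v p)) := by
  classical
  rw [free11_iff] at hu hv
  set s : Finset (Fin n) := univ.filter (fun i => u i ≠ v i) with hs_def
  have hs : s.Nonempty := by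
    obtain ⟨i, hi⟩ := Function.ne_iff.mp hne
    exact ⟨i, by simp [hs_def, hi]⟩
  by_cases hzero : ∃ p ∈ s, v p = 0
  · obtain ⟨p, hps, hp0⟩ := hzero
    have hpd : u p ≠ v p := by simpa [hs_def] using hps
    refine ⟨p, hpd, ?_⟩
    rw [free11_iff]
    rintro j h ⟨h1, h2⟩
    set a : Fin n := ⟨j, by omega⟩
    set b : Fin n := ⟨j+1, by omega⟩
    have ha : a ≠ p := by
      intro hap; rw [hap, Function.update_self, hp0] at h1
      exact absurd h1 (by decide)
    have hb : b ≠ p := by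
      intro hbp; rw [hbp, Function.update_self, hp0] at h2
      exact absurd h2 (by decide)
    rw [Function.update_of_ne ha] at h1
    rw [Function.update_of_ne hb] at h2
    exact hu j h ⟨h1, h2⟩
  · -- all differing positions have v = 1, u = 0
    push_neg at hzero
    have hall : ∀ q ∈ s, v q = 1 ∧ u q = 0 := by
      intro q hq
      have hq1 : v q = 1 := (fin2_eq_zero_or_one (v q)).resolve_left (hzero q hq)
      have hqd : u q ≠ v q := by simpa [hs_def] using hq
      refine ⟨hq1, ?_⟩
      rcases fin2_eq_zero_or_one (u q) with h0 | h1
      · exact h0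
      · exact absurd (h1.trans hq1.symm) hqd
    set p := s.min' hs with hp_def
    have hps : p ∈ s := s.min'_mem hs
    have hpd : u p ≠ v p := by simpa [hs_def] using hps
    have hvp : v p = 1 := (hall p hps).1
    refine ⟨p, hpd, ?_⟩
    rw [free11_iff]
    rintro j h ⟨h1, h2⟩
    set a : Fin n := ⟨j, by omega⟩ with ha_def
    set b : Fin n := ⟨j+1, by omega⟩ with hb_def
    have hab : a ≠ b := by simp [ha_def, hb_def, Fin.ext_iff]
    by_cases hap : a = p
    · -- b ≠ p, u' b = u b = 1
      have hbp : b ≠ p := fun hbp => hab (hap.trans hbp.symm)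
      rw [Function.update_of_ne hbp] at h2
      by_cases hbs : b ∈ s
      · exact absurd h2 (by rw [(hall b hbs).2]; decide)
      · have hvb : v b = u b := by
          by_contra hne'
          exact hbs (by simp [hs_def]; exact fun hh => hne' hh.symm)
        have hva : v a = 1 := by rw [hap]; exact hvp
        exact hv j h ⟨hva, hvb.trans h2⟩
    · rw [Function.update_of_ne hap] at h1
      by_cases hbp : b = p
      · -- a ∉ s by minimality, so v a = u a = 1
        have has : a ∉ s := by
          intro has
          have := s.min'_le a has
          rw [← hp_def] at this
          have : p ≤ a := this
          have hlt : (a : ℕ) < (p : ℕ) := by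
            rw [← hbp]; simp [ha_def, hb_def]
          omega
        have hva : v a = u a := by
          by_contra hne'
          exact has (by simp [hs_def]; exact fun hh => hne' hh.symm)
        have hvb : v b = 1 := by rw [hbp]; exact hvp
        exact hv j h ⟨hva.trans h1, hvb⟩
      · rw [Function.update_of_ne hbp] at h2
        exact hu j h ⟨h1, h2⟩

lemma main11 : ∀ (d n : ℕ) (u v : Fin n → Fin 2), hammingDist u v ≤ d →
    Free (![1,1] : Fin 2 → Fin 2) u → Free (![1,1] : Fin 2 → Fin 2) v →
    FreeTransform (![1,1] : Fin 2 → Fin 2) u v := by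
  intro d
  induction d with
  | zero =>
    intro n u v hd hu hv
    have he : u = v := hammingDist_eq_zero.mp (Nat.le_zero.mp hd)
    subst he
    refine ⟨fun _ => u, rfl, rfl, fun _ => hu, fun j => ?_⟩
    have h1 := j.isLt
    have h2 : hammingDist u u = 0 := hammingDist_self u
    omega
  | succ d ih =>
    intro n u v hd hu hv
    by_cases hle : hammingDist u v ≤ d
    · exact ih n u v hle hu hv
    have hne : u ≠ v := by
      intro he
      rw [he, hammingDist_self] at hle
      omega
    obtain ⟨p, hpd, hufree⟩ := key hu hv hne
    set u' := Function.update u p (v p) with hu'_def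
    have hD : hammingDist u' v + 1 = hammingDist u v := dist_update u v p hpd
    obtain ⟨w', hw0, hwl, hwf, hws⟩ := ih n u' v (by omega) hufree hv
    refine ⟨fun i => if h0 : i.1 = 0 then u else w' ⟨i.1 - 1, by have := i.isLt; omega⟩,
      by simp, ?_, ?_, ?_⟩
    · have hDne : ¬ (Fin.last (hammingDist u v)).1 = 0 := by
        simp only [Fin.val_last]
        omega
      simp only [dif_neg hDne]
      have he : (⟨(Fin.last (hammingDist u v)).1 - 1, by have := (Fin.last (hammingDist u v)).isLt; omega⟩ : Fin (hammingDist u' v + 1))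
          = Fin.last (hammingDist u' v) := by
        simp only [Fin.ext_iff, Fin.val_last]
        omega
      rw [he]
      exact hwl
    · intro i
      by_cases h0 : i.1 = 0
      · simp only [dif_pos h0]
        exact hu
      · simp only [dif_neg h0]
        exact hwf _
    · intro j
      by_cases h0 : j.1 = 0
      · have hc : ¬ (j.castSucc).1 = 0 → False := fun h => h h0
        have hcp : (j.castSucc).1 = 0 := h0
        have hsne : ¬ (j.succ).1 = 0 := by simp [Fin.val_succ]
        refine ⟨p, ?_, ?_⟩
        · simp only [dif_pos hcp]
          exact hpd
        · simp only [dif_pos hcp, dif_neg hsne]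
          have he : (⟨(j.succ).1 - 1, by have := (j.succ).isLt; omega⟩ : Fin (hammingDist u' v + 1))
              = 0 := by
            simp only [Fin.ext_iff, Fin.val_succ, h0, Fin.val_zero]
          rw [he, hw0]
      · obtain ⟨m, hm⟩ : ∃ m, j.1 = m + 1 := ⟨j.1 - 1, by omega⟩
        have hmk : m < hammingDist u' v := by have := j.isLt; omega
        obtain ⟨q, hq1, hq2⟩ := hws ⟨m, hmk⟩
        have hcval : (j.castSucc).1 = m + 1 := hm
        have hsval : (j.succ).1 = m + 2 := by simp [Fin.val_succ, hm]
        have hcne : ¬ (j.castSucc).1 = 0 := by omega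
        have hsne : ¬ (j.succ).1 = 0 := by omega
        have e1 : (⟨(j.castSucc).1 - 1, by have := (j.castSucc).isLt; omega⟩ : Fin (hammingDist u' v + 1))
            = (⟨m, hmk⟩ : Fin (hammingDist u' v)).castSucc := by
          simp only [Fin.ext_iff, Fin.coe_castSucc, hcval]
          omega
        have e2 : (⟨(j.succ).1 - 1, by have := (j.succ).isLt; omega⟩ : Fin (hammingDist u' v + 1))
            = (⟨m, hmk⟩ : Fin (hammingDist u' v)).succ := by
          simp only [Fin.ext_iff, Fin.val_succ, hsval]
          omega
        refine ⟨q, ?_, ?_⟩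
        · simp only [dif_neg hcne]
          rw [e1]
          exact hq1
        · simp only [dif_neg hcne, dif_neg hsne]
          rw [e1, e2]
          exact hq2


theorem stmt5 : HammingIsometric (![1,1] : Fin 2 → Fin 2) := by
  intro n u v hu hv
  exact main11 (hammingDist u v) n u v le_rfl hu hv
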